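/- Let f : ℝ^n → ℝ be a twice continuously differentiable convex function whose Hessian ∇²f is Lipschitz continuous (in operator norm), g : ℝ^n → (-∞, ∞] a proper closed convex function, ν > 0, and x̄ ∈ ℝ^n. Suppose ∂_B prox_{νg} is a strong linear Newton approximation of prox_{νg} at z̄ := x̄ − ν∇f(x̄), i.e., ‖prox_{νg}(z̄) − prox_{νg}(z) − V(z̄ − z)‖₂ = O(‖z̄ − z‖₂²) as z → z̄, uniformly over V ∈ ∂_B prox_{νg}(z). Then ∂F_ν is a strong linear Newton approximation of F_ν at x̄: ‖F_ν(x̄) − F_ν(y) − U(x̄ − y)‖₂ = O(‖x̄ − y‖₂²) as y → x̄, uniformly over U ∈ ∂F_ν(y). -/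

import Mathlib

open Filter Topology

/-- The B-subdifferential of a map `F : ℝ^n → ℝ^n` at `x`: the set of limits of
derivatives `∇F(x^(k))` along sequences `x^(k) → x` of differentiability points of `F`. -/
def Bsubdiff {n : ℕ} (F : EuclideanSpace ℝ (Fin n) → EuclideanSpace ℝ (Fin n))
    (x : EuclideanSpace ℝ (Fin n)) :
    Set (EuclideanSpace ℝ (Fin n) →L[ℝ] EuclideanSpace ℝ (Fin n)) :=
  {V | ∃ u : ℕ → EuclideanSpace ℝ (Fin n),
      Filter.Tendsto u Filter.atTop (nhds x) ∧
      (∀ k, DifferentiableAt ℝ F (u k)) ∧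
      Filter.Tendsto (fun k => fderiv ℝ F (u k)) Filter.atTop (nhds V)}

/-- The proximal-gradient residual `F_ν(x) = x − prox_{νg}(x − ν ∇f(x))`,
where `prox` denotes the proximal map of `νg`. -/
noncomputable def Fnu {n : ℕ} (f : EuclideanSpace ℝ (Fin n) → ℝ)
    (prox : EuclideanSpace ℝ (Fin n) → EuclideanSpace ℝ (Fin n)) (ν : ℝ)
    (x : EuclideanSpace ℝ (Fin n)) : EuclideanSpace ℝ (Fin n) :=
  x - prox (x - ν • gradient f x)

/-- The set-valued map `∂F_ν(x) = { I − V(I − ν ∇²f(x)) : V ∈ ∂_B prox_{νg}(x − ν∇f(x)) }`. -/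
noncomputable def DFnu {n : ℕ} (f : EuclideanSpace ℝ (Fin n) → ℝ)
    (prox : EuclideanSpace ℝ (Fin n) → EuclideanSpace ℝ (Fin n)) (ν : ℝ)
    (x : EuclideanSpace ℝ (Fin n)) :
    Set (EuclideanSpace ℝ (Fin n) →L[ℝ] EuclideanSpace ℝ (Fin n)) :=
  {U | ∃ V ∈ Bsubdiff prox (x - ν • gradient f x),
    U = 1 - V * (1 - ν • fderiv ℝ (gradient f) x)}

/-! ### Auxiliary lemmas -/

lemma par_aux' {E : Type*} [NormedAddCommGroup E] [InnerProductSpace ℝ E] (a b : E) :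
    ‖(1/2:ℝ) • (a + b)‖^2 = ‖a‖^2/2 + ‖b‖^2/2 - ‖a - b‖^2/4 := by
  rw [norm_smul, mul_pow, @norm_add_sq_real, @norm_sub_sq_real]
  rw [Real.norm_eq_abs]
  ring_nf

lemma par_lemma' {E : Type*} [NormedAddCommGroup E] [InnerProductSpace ℝ E] (u v x : E) :
    ‖(1/2:ℝ) • u + (1/2:ℝ) • v - x‖^2 = ‖u - x‖^2/2 + ‖v - x‖^2/2 - ‖u - v‖^2/4 := by
  have h1 : (1/2:ℝ) • u + (1/2:ℝ) • v - x = (1/2:ℝ) • ((u - x) + (v - x)) := by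
    rw [smul_add]; module
  have h2 : u - v = (u - x) - (v - x) := by abel
  rw [h1, h2, par_aux']

section ProxAux

variable {E : Type*} [NormedAddCommGroup E] [InnerProductSpace ℝ E]
  (g : E → EReal) (ν : ℝ) (prox : E → E)

lemma prox_ne_top' (hν : 0 < ν) (hg_nebot : ∀ x, g x ≠ ⊥) (hg_proper : ∃ x, g x ≠ ⊤)
    (hprox : ∀ x, IsMinOn
      (fun z => (ν : EReal) * g z + ((‖z - x‖ ^ 2 / 2 : ℝ) : EReal)) Set.univ (prox x)) :
    ∀ x, g (prox x) ≠ ⊤ := by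
  intro x htop
  obtain ⟨x₀, hx₀⟩ := hg_proper
  have h := isMinOn_iff.mp (hprox x) x₀ (Set.mem_univ x₀)
  rw [htop, EReal.coe_mul_top_of_pos hν, EReal.top_add_coe] at h
  rw [← EReal.coe_toReal hx₀ (hg_nebot x₀), ← EReal.coe_mul, ← EReal.coe_add] at h
  exact (EReal.coe_lt_top _).not_ge h

lemma prox_grow' (hν : 0 < ν) (hg_nebot : ∀ x, g x ≠ ⊥) (hg_proper : ∃ x, g x ≠ ⊤)
    (hg_conv : ∀ x y : E, ∀ a b : ℝ, 0 ≤ a → 0 ≤ b → a + b = 1 →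
      g (a • x + b • y) ≤ (a : EReal) * g x + (b : EReal) * g y)
    (hprox : ∀ x, IsMinOn
      (fun z => (ν : EReal) * g z + ((‖z - x‖ ^ 2 / 2 : ℝ) : EReal)) Set.univ (prox x))
    (x w : E) (hw : g w ≠ ⊤) :
    ν * (g (prox x)).toReal + ‖prox x - x‖^2/2 + ‖prox x - w‖^2/4
      ≤ ν * (g w).toReal + ‖w - x‖^2/2 := by
  set u := prox x with hu
  have hut : g u ≠ ⊤ := prox_ne_top' g ν prox hν hg_nebot hg_proper hprox x
  have hcu : ((g u).toReal : EReal) = g u := EReal.coe_toReal hut (hg_nebot u)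
  have hcw : ((g w).toReal : EReal) = g w := EReal.coe_toReal hw (hg_nebot w)
  have hconv := hg_conv u w (1/2) (1/2) (by norm_num) (by norm_num) (by norm_num)
  rw [← hcu, ← hcw, ← EReal.coe_mul, ← EReal.coe_mul, ← EReal.coe_add] at hconv
  set m := (1/2:ℝ) • u + (1/2:ℝ) • w with hm
  have hmt : g m ≠ ⊤ := by
    intro h; rw [h] at hconv; exact (EReal.coe_lt_top _).not_ge hconv
  have hcm : ((g m).toReal : EReal) = g m := EReal.coe_toReal hmt (hg_nebot m)
  rw [← hcm, EReal.coe_le_coe_iff] at hconv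
  have hmin := isMinOn_iff.mp (hprox x) m (Set.mem_univ m)
  rw [← hcu, ← hcm, ← EReal.coe_mul, ← EReal.coe_mul, ← EReal.coe_add, ← EReal.coe_add,
    EReal.coe_le_coe_iff] at hmin
  have hpar := par_lemma' u w x
  have hmul : ν * (g m).toReal ≤ ν * (1/2 * (g u).toReal + 1/2 * (g w).toReal) :=
    mul_le_mul_of_nonneg_left hconv hν.le
  rw [hpar] at hmin
  nlinarith [hmin, hmul]

lemma prox_lip' (hν : 0 < ν) (hg_nebot : ∀ x, g x ≠ ⊥) (hg_proper : ∃ x, g x ≠ ⊤)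
    (hg_conv : ∀ x y : E, ∀ a b : ℝ, 0 ≤ a → 0 ≤ b → a + b = 1 →
      g (a • x + b • y) ≤ (a : EReal) * g x + (b : EReal) * g y)
    (hprox : ∀ x, IsMinOn
      (fun z => (ν : EReal) * g z + ((‖z - x‖ ^ 2 / 2 : ℝ) : EReal)) Set.univ (prox x)) :
    LipschitzWith 2 prox := by
  have key : ∀ x y, ‖prox x - prox y‖ ≤ 2 * ‖x - y‖ := by
    intro x y
    have h1 := prox_grow' g ν prox hν hg_nebot hg_proper hg_conv hprox x (prox y)
      (prox_ne_top' g ν prox hν hg_nebot hg_proper hprox y)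
    have h2 := prox_grow' g ν prox hν hg_nebot hg_proper hg_conv hprox y (prox x)
      (prox_ne_top' g ν prox hν hg_nebot hg_proper hprox x)
    set u := prox x
    set v := prox y
    have hsym : ‖v - u‖ = ‖u - v‖ := norm_sub_rev v u
    have hinner : ‖v - x‖^2 + ‖u - y‖^2 - ‖u - x‖^2 - ‖v - y‖^2
        = 2 * (inner ℝ (u - v) (x - y) : ℝ) := by
      simp only [@norm_sub_sq_real, inner_sub_left, inner_sub_right]
      ring
    have hcs : (inner ℝ (u - v) (x - y) : ℝ) ≤ ‖u - v‖ * ‖x - y‖ := real_inner_le_norm _ _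
    rw [hsym] at h2
    have ht : ‖u - v‖^2 ≤ 2 * (‖u - v‖ * ‖x - y‖) := by linarith
    nlinarith [norm_nonneg (u - v), norm_nonneg (x - y), ht]
  exact LipschitzWith.of_dist_le_mul fun a b => by
    simpa [dist_eq_norm] using key a b

end ProxAux

set_option maxHeartbeats 1000000 in
/-- Proposition 3.2, second part. If moreover `∇²f` is Lipschitz and
`∂_B prox_{νg}` is a strong linear Newton approximation of `prox_{νg}` at
`z̄ = x̄ − ν∇f(x̄)`, then `∂F_ν` is a strong linear Newton approximation of `F_ν` at `x̄`. -/
theorem statement9 {n : ℕ} (f : EuclideanSpace ℝ (Fin n) → ℝ)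
    (g : EuclideanSpace ℝ (Fin n) → EReal) (ν : ℝ) (hν : 0 < ν)
    (hf : ContDiff ℝ 2 f) (hf_conv : ConvexOn ℝ Set.univ f)
    (L : NNReal) (hhessLip : LipschitzWith L (fun x => fderiv ℝ (gradient f) x))
    (hg_nebot : ∀ x, g x ≠ ⊥) (hg_proper : ∃ x, g x ≠ ⊤)
    (hg_closed : LowerSemicontinuous g)
    (hg_conv : ∀ x y : EuclideanSpace ℝ (Fin n), ∀ a b : ℝ, 0 ≤ a → 0 ≤ b → a + b = 1 →
      g (a • x + b • y) ≤ (a : EReal) * g x + (b : EReal) * g y)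
    (prox : EuclideanSpace ℝ (Fin n) → EuclideanSpace ℝ (Fin n))
    (hprox : ∀ x, IsMinOn
      (fun z => (ν : EReal) * g z + ((‖z - x‖ ^ 2 / 2 : ℝ) : EReal)) Set.univ (prox x))
    (xbar : EuclideanSpace ℝ (Fin n))
    (hsLNA : ∃ C > (0 : ℝ), ∃ δ > (0 : ℝ), ∀ z : EuclideanSpace ℝ (Fin n),
      ‖z - (xbar - ν • gradient f xbar)‖ < δ → ∀ V ∈ Bsubdiff prox z,
        ‖prox (xbar - ν • gradient f xbar) - prox z - V ((xbar - ν • gradient f xbar) - z)‖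
          ≤ C * ‖(xbar - ν • gradient f xbar) - z‖ ^ 2) :
    ∃ C > (0 : ℝ), ∃ δ > (0 : ℝ), ∀ y : EuclideanSpace ℝ (Fin n), ‖y - xbar‖ < δ →
      ∀ U ∈ DFnu f prox ν y,
        ‖Fnu f prox ν xbar - Fnu f prox ν y - U (xbar - y)‖ ≤ C * ‖xbar - y‖ ^ 2 := by
  obtain ⟨C₀, hC₀, δ₀, hδ₀, hA⟩ := hsLNA
  have hLip : LipschitzWith 2 prox := prox_lip' g ν prox hν hg_nebot hg_proper hg_conv hprox
  have hVle : ∀ (z : EuclideanSpace ℝ (Fin n))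
      (V : EuclideanSpace ℝ (Fin n) →L[ℝ] EuclideanSpace ℝ (Fin n)),
      V ∈ Bsubdiff prox z → ‖V‖ ≤ 2 := by
    rintro z V ⟨u, -, -, hconv⟩
    have hb : ∀ k, ‖fderiv ℝ prox (u k)‖ ≤ ((2:NNReal):ℝ) := fun k =>
      norm_fderiv_le_of_lipschitz ℝ hLip
    have := le_of_tendsto hconv.norm (Filter.Eventually.of_forall hb)
    exact_mod_cast this
  have hgrad_cd : ContDiff ℝ 1 (gradient f) := by
    have h1 : ContDiff ℝ 1 (fderiv ℝ f) := hf.fderiv_right (by norm_num)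
    exact (InnerProductSpace.toDual ℝ _).symm.contDiff.comp h1
  have hgd : Differentiable ℝ (gradient f) := hgrad_cd.differentiable one_ne_zero
  have hTaylor : ∀ x y : EuclideanSpace ℝ (Fin n),
      ‖gradient f x - gradient f y - fderiv ℝ (gradient f) y (x - y)‖ ≤ L * ‖x - y‖^2 := by
    intro x y
    set H := fderiv ℝ (gradient f) y with hH
    set φ : EuclideanSpace ℝ (Fin n) → EuclideanSpace ℝ (Fin n) := fun u => gradient f u - H u
      with hφ
    have key : ‖φ x - φ y‖ ≤ (L * ‖x - y‖) * ‖x - y‖ := by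
      apply Convex.norm_image_sub_le_of_norm_hasFDerivWithin_le
        (f' := fun u => fderiv ℝ (gradient f) u - H)
        (fun u _ => ((hgd u).hasFDerivAt.sub H.hasFDerivAt).hasFDerivWithinAt)
        (fun u hu => ?_) (convex_closedBall y ‖x - y‖) (Metric.mem_closedBall_self (norm_nonneg _))
        (by simp [Metric.mem_closedBall, dist_eq_norm])
      calc ‖fderiv ℝ (gradient f) u - H‖
          = dist (fderiv ℝ (gradient f) u) (fderiv ℝ (gradient f) y) := (dist_eq_norm _ _).symm
        _ ≤ L * dist u y := hhessLip.dist_le_mul u y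
        _ ≤ L * ‖x - y‖ := by
            rw [dist_eq_norm]
            exact mul_le_mul_of_nonneg_left (by rwa [Metric.mem_closedBall, dist_eq_norm] at hu)
              (NNReal.coe_nonneg L)
    have hid : φ x - φ y = gradient f x - gradient f y - H (x - y) := by
      simp only [hφ, map_sub]; abel
    rw [hid] at key
    calc ‖gradient f x - gradient f y - H (x - y)‖ ≤ (L * ‖x - y‖) * ‖x - y‖ := key
      _ = L * ‖x - y‖^2 := by ring
  set B : ℝ := ‖fderiv ℝ (gradient f) xbar‖ with hB
  set K : ℝ := B + 2 * L with hKdef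
  have hL0 : (0:ℝ) ≤ L := NNReal.coe_nonneg L
  have hB0 : 0 ≤ B := norm_nonneg _
  have hK0 : 0 ≤ K := by positivity
  set M : ℝ := 1 + ν * K with hMdef
  have hM0 : 0 < M := by nlinarith
  refine ⟨C₀ * M^2 + 2 * (ν * L), ?_, min 1 (δ₀ / M), lt_min one_pos (div_pos hδ₀ hM0), ?_⟩
  · have h1 : 0 < C₀ * M^2 := mul_pos hC₀ (by positivity)
    nlinarith [mul_nonneg hν.le hL0]
  intro y hy U hU
  obtain ⟨V, hV, rfl⟩ := hU
  have hy1 : ‖y - xbar‖ < 1 := lt_of_lt_of_le hy (min_le_left _ _)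
  have hy2 : ‖y - xbar‖ < δ₀ / M := lt_of_lt_of_le hy (min_le_right _ _)
  have hxy : ‖xbar - y‖ = ‖y - xbar‖ := norm_sub_rev _ _
  -- Hessian bound near xbar
  have hHd : ‖fderiv ℝ (gradient f) y - fderiv ℝ (gradient f) xbar‖ ≤ L * ‖y - xbar‖ := by
    have h := hhessLip.dist_le_mul y xbar
    simp only [dist_eq_norm] at h
    exact h
  have hHy : ‖fderiv ℝ (gradient f) y‖ ≤ B + L * ‖y - xbar‖ := by
    calc ‖fderiv ℝ (gradient f) y‖
        = ‖fderiv ℝ (gradient f) xbar + (fderiv ℝ (gradient f) y - fderiv ℝ (gradient f) xbar)‖ := by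
          congr 1; abel
      _ ≤ B + ‖fderiv ℝ (gradient f) y - fderiv ℝ (gradient f) xbar‖ := norm_add_le _ _
      _ ≤ B + L * ‖y - xbar‖ := by linarith
  -- gradient difference bound
  have hgradb : ‖gradient f xbar - gradient f y‖ ≤ K * ‖xbar - y‖ := by
    have ht := hTaylor xbar y
    have h2 : ‖fderiv ℝ (gradient f) y (xbar - y)‖ ≤ (B + L * ‖y - xbar‖) * ‖xbar - y‖ :=
      le_trans (ContinuousLinearMap.le_opNorm _ _)
        (mul_le_mul_of_nonneg_right hHy (norm_nonneg _))
    have hsplit : gradient f xbar - gradient f y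
        = (gradient f xbar - gradient f y - fderiv ℝ (gradient f) y (xbar - y))
          + fderiv ℝ (gradient f) y (xbar - y) := by abel
    rw [hsplit]
    refine le_trans (norm_add_le _ _) ?_
    rw [hxy, hKdef]
    rw [hxy] at ht h2
    nlinarith [mul_nonneg hL0 (norm_nonneg (y - xbar)), hy1.le, ht, h2,
      norm_nonneg (y - xbar)]
  -- distance between the two prox arguments
  have hzz : ‖(xbar - ν • gradient f xbar) - (y - ν • gradient f y)‖ ≤ M * ‖xbar - y‖ := by
    have hrw : (xbar - ν • gradient f xbar) - (y - ν • gradient f y)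
        = (xbar - y) - ν • (gradient f xbar - gradient f y) := by
      rw [smul_sub]; abel
    rw [hrw]
    refine le_trans (norm_sub_le _ _) ?_
    rw [norm_smul, Real.norm_eq_abs, abs_of_pos hν]
    nlinarith [mul_le_mul_of_nonneg_left hgradb hν.le, norm_nonneg (xbar - y)]
  have hzδ : ‖(y - ν • gradient f y) - (xbar - ν • gradient f xbar)‖ < δ₀ := by
    rw [norm_sub_rev]
    calc ‖(xbar - ν • gradient f xbar) - (y - ν • gradient f y)‖ ≤ M * ‖xbar - y‖ := hzz
      _ < M * (δ₀ / M) := by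
          refine mul_lt_mul_of_pos_left ?_ hM0
          rw [hxy]; exact hy2
      _ = δ₀ := by field_simp
  have hAest := hA (y - ν • gradient f y) hzδ V hV
  -- algebraic identity
  have hid : Fnu f prox ν xbar - Fnu f prox ν y
        - (1 - V * (1 - ν • fderiv ℝ (gradient f) y)) (xbar - y)
      = -(prox (xbar - ν • gradient f xbar) - prox (y - ν • gradient f y)
          - V ((xbar - ν • gradient f xbar) - (y - ν • gradient f y)))
        + V (ν • (gradient f xbar - gradient f y - fderiv ℝ (gradient f) y (xbar - y))) := by
    simp only [Fnu, ContinuousLinearMap.sub_apply, ContinuousLinearMap.one_apply,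
      ContinuousLinearMap.mul_apply, ContinuousLinearMap.smul_apply, map_sub, map_smul, map_add,
      smul_sub, smul_add]
    abel
  rw [hid]
  refine le_trans (norm_add_le _ _) ?_
  rw [norm_neg]
  have hterm2 : ‖V (ν • (gradient f xbar - gradient f y
      - fderiv ℝ (gradient f) y (xbar - y)))‖ ≤ 2 * (ν * (L * ‖xbar - y‖^2)) := by
    have h := V.le_opNorm (ν • (gradient f xbar - gradient f y
      - fderiv ℝ (gradient f) y (xbar - y)))
    rw [norm_smul, Real.norm_eq_abs, abs_of_pos hν] at h
    have hVb := hVle _ V hV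
    have hw := hTaylor xbar y
    have h1 : ν * ‖gradient f xbar - gradient f y - fderiv ℝ (gradient f) y (xbar - y)‖
        ≤ ν * (L * ‖xbar - y‖^2) := mul_le_mul_of_nonneg_left hw hν.le
    have h2 : ‖V‖ * (ν * ‖gradient f xbar - gradient f y - fderiv ℝ (gradient f) y (xbar - y)‖)
        ≤ 2 * (ν * ‖gradient f xbar - gradient f y - fderiv ℝ (gradient f) y (xbar - y)‖) := by
      refine mul_le_mul_of_nonneg_right hVb ?_
      positivity
    have h3 := mul_le_mul_of_nonneg_left h1 (by norm_num : (0:ℝ) ≤ 2)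
    linarith
  have hterm1 : ‖prox (xbar - ν • gradient f xbar) - prox (y - ν • gradient f y)
      - V ((xbar - ν • gradient f xbar) - (y - ν • gradient f y))‖
        ≤ C₀ * (M * ‖xbar - y‖)^2 := by
    refine le_trans hAest ?_
    have h0 := norm_nonneg ((xbar - ν • gradient f xbar) - (y - ν • gradient f y))
    exact mul_le_mul_of_nonneg_left (pow_le_pow_left₀ h0 hzz 2) hC₀.le
  nlinarith [hterm1, hterm2, norm_nonneg (xbar - y)]
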